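/- arXiv:2101.05692 — 3 statements merged into one kernel-verified Lean document; each statement's English description precedes it below -/
import Mathlib

section
/- Let λ_j = e^{iθ_j}, j = 1,...,d, be eigenvalues of a unitary U all lying in an arc of angular width θ ≤ π, and let (j₀, k₀) be indices achieving the maximum angular separation |θ_{j₀} − θ_{k₀}| among all pairs. Then the minimum of |Σ_j t_j e^{iθ_j}| over convex weights (t_j ≥ 0, Σ t_j = 1) equals √(1/2 + (1/2)cos(θ_{j₀} − θ_{k₀})), i.e., the minimum absolute value of the numerical range δ(U) = √(1/2 + (1/2)cos(θ_{j₀} − θ_{k₀})). -/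
open BigOperators

/-- If eigenvalues `e^{iθⱼ}` of a unitary all lie in an arc of width `θarc ≤ π`
and `(j₀, k₀)` achieves the maximal angular separation, then the minimum of
`|Σⱼ tⱼ e^{iθⱼ}|` over convex weights (i.e. the minimum modulus over the convex hull of the
eigenvalues, which is δ(U)) equals `√(1/2 + (1/2)cos(θⱼ₀ − θ_k₀))`. -/
theorem min_abs_convex_hull_arc {d : ℕ} (θs : Fin d → ℝ) (θarc a : ℝ)
    (hθ : θarc ≤ Real.pi) (hθ0 : 0 ≤ θarc)
    (harc : ∀ j, θs j ∈ Set.Icc a (a + θarc))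
    (j₀ k₀ : Fin d)
    (hmax : ∀ j k, |θs j - θs k| ≤ |θs j₀ - θs k₀|) :
    (⨅ t : {t : Fin d → ℝ // (∀ j, 0 ≤ t j) ∧ ∑ j, t j = 1},
        ‖∑ j, (t.1 j : ℂ) * Complex.exp ((θs j : ℂ) * Complex.I)‖) =
      Real.sqrt (1/2 + (1/2) * Real.cos (θs j₀ - θs k₀)) := by
  set Δ : ℝ := θs j₀ - θs k₀ with hΔdef
  have hΔarc : |Δ| ≤ θarc := by
    have h1 := harc j₀; have h2 := harc k₀
    rw [abs_le]
    exact ⟨by linarith [h1.1, h2.2], by linarith [h1.2, h2.1]⟩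
  have hΔpi : |Δ| ≤ Real.pi := hΔarc.trans hθ
  have hΔpi' := abs_le.mp hΔpi
  have hpi := Real.pi_pos
  have hcosnn : 0 ≤ Real.cos (Δ / 2) :=
    Real.cos_nonneg_of_mem_Icc ⟨by linarith, by linarith⟩
  have hsqrt : Real.sqrt (1/2 + (1/2) * Real.cos Δ) = Real.cos (Δ / 2) := by
    have h1 : Real.cos (Δ / 2) ^ 2 = 1/2 + (1/2) * Real.cos Δ := by
      rw [Real.cos_sq]; ring_nf
    rw [← h1, Real.sqrt_sq hcosnn]
  set c : ℝ := Real.cos (Δ / 2) with hcdef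
  set μ : ℝ := (θs j₀ + θs k₀) / 2 with hμdef
  -- each point in the hull has angle within |Δ|/2 of μ
  have hang : ∀ j, c ≤ Real.cos (θs j - μ) := by
    intro j
    have hu := abs_le.mp (hmax j j₀)
    have hv := abs_le.mp (hmax j k₀)
    have habs : |θs j - μ| ≤ |Δ| / 2 := by
      rcases abs_cases Δ with ⟨hE, hs⟩ | ⟨hE, hs⟩ <;> rw [hE] at hu hv ⊢ <;>
        rw [abs_le] <;> constructor <;>
        simp only [hΔdef, hμdef] at * <;> linarith
    calc c = Real.cos (|Δ| / 2) := by rw [hcdef, ← Real.cos_abs (Δ/2), abs_div, abs_two]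
      _ ≤ Real.cos |θs j - μ| :=
          Real.cos_le_cos_of_nonneg_of_le_pi (abs_nonneg _) (by linarith [abs_le.mp hΔpi]) habs
      _ = Real.cos (θs j - μ) := Real.cos_abs _
  -- the extremal weights
  set t₀ : Fin d → ℝ := fun j => (if j = j₀ then (1/2 : ℝ) else 0) + (if j = k₀ then (1/2:ℝ) else 0)
    with ht₀def
  have ht₀nn : ∀ j, 0 ≤ t₀ j := by
    intro j; rw [ht₀def]; dsimp only; split_ifs <;> norm_num
  have ht₀sum : ∑ j, t₀ j = 1 := by
    rw [ht₀def]
    rw [Finset.sum_add_distrib]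
    simp [Finset.sum_ite_eq']
    norm_num
  have hT : Nonempty {t : Fin d → ℝ // (∀ j, 0 ≤ t j) ∧ ∑ j, t j = 1} :=
    ⟨⟨t₀, ht₀nn, ht₀sum⟩⟩
  -- value at extremal weights
  have hval : ‖∑ j, (t₀ j : ℂ) * Complex.exp ((θs j : ℂ) * Complex.I)‖ = c := by
    have hsum : ∑ j, (t₀ j : ℂ) * Complex.exp ((θs j : ℂ) * Complex.I)
        = (1/2 : ℂ) * Complex.exp ((θs j₀ : ℂ) * Complex.I)
          + (1/2 : ℂ) * Complex.exp ((θs k₀ : ℂ) * Complex.I) := by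
      rw [ht₀def]
      push_cast [apply_ite Complex.ofReal]
      simp only [add_mul, Finset.sum_add_distrib, ite_mul, zero_mul]
      rw [Finset.sum_ite_eq' Finset.univ j₀, Finset.sum_ite_eq' Finset.univ k₀]
      simp
    rw [hsum, ← hsqrt, Complex.norm_def, Complex.normSq_apply]
    congr 1
    have hre : ∀ x : ℝ, ((1/2 : ℂ) * Complex.exp ((x:ℂ) * Complex.I)).re = Real.cos x / 2 := by
      intro x
      rw [Complex.mul_re, Complex.exp_ofReal_mul_I_re, Complex.exp_ofReal_mul_I_im]
      norm_num
      ring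
    have him : ∀ x : ℝ, ((1/2 : ℂ) * Complex.exp ((x:ℂ) * Complex.I)).im = Real.sin x / 2 := by
      intro x
      rw [Complex.mul_im, Complex.exp_ofReal_mul_I_re, Complex.exp_ofReal_mul_I_im]
      norm_num
      ring
    rw [Complex.add_re, Complex.add_im, hre, hre, him, him, hΔdef, Real.cos_sub]
    nlinarith [Real.sin_sq_add_cos_sq (θs j₀), Real.sin_sq_add_cos_sq (θs k₀)]
  -- lower bound for every convex combination
  have hlb : ∀ t : {t : Fin d → ℝ // (∀ j, 0 ≤ t j) ∧ ∑ j, t j = 1},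
      c ≤ ‖∑ j, (t.1 j : ℂ) * Complex.exp ((θs j : ℂ) * Complex.I)‖ := by
    rintro ⟨t, ht0, ht1⟩
    set z : ℂ := ∑ j, (t j : ℂ) * Complex.exp ((θs j : ℂ) * Complex.I) with hzdef
    have key : c ≤ (Complex.exp ((-μ : ℝ) * Complex.I) * z).re := by
      rw [hzdef, Finset.mul_sum]
      have hterm : ∀ j, Complex.exp ((-μ : ℝ) * Complex.I)
          * ((t j : ℂ) * Complex.exp ((θs j : ℂ) * Complex.I))
          = (t j : ℂ) * Complex.exp (((θs j - μ : ℝ) : ℂ) * Complex.I) := by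
        intro j
        rw [mul_comm, mul_assoc, ← Complex.exp_add]
        congr 2
        push_cast
        ring
      simp only [hterm]
      rw [Complex.re_sum]
      have hre : ∀ j, ((t j : ℂ) * Complex.exp (((θs j - μ : ℝ) : ℂ) * Complex.I)).re
          = t j * Real.cos (θs j - μ) := by
        intro j
        rw [Complex.mul_re, Complex.exp_ofReal_mul_I_re, Complex.exp_ofReal_mul_I_im]
        simp
      simp only [hre]
      calc c = ∑ j, t j * c := by rw [← Finset.sum_mul, ht1, one_mul]
        _ ≤ ∑ j, t j * Real.cos (θs j - μ) :=
            Finset.sum_le_sum fun j _ => mul_le_mul_of_nonneg_left (hang j) (ht0 j)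
    calc c ≤ (Complex.exp ((-μ : ℝ) * Complex.I) * z).re := key
      _ ≤ ‖Complex.exp ((-μ : ℝ) * Complex.I) * z‖ := Complex.re_le_norm _
      _ = ‖z‖ := by rw [norm_mul, Complex.norm_exp_ofReal_mul_I, one_mul]
  rw [hsqrt]
  refine le_antisymm ?_ (le_ciInf hlb)
  have hbdd : BddBelow (Set.range fun t : {t : Fin d → ℝ // (∀ j, 0 ≤ t j) ∧ ∑ j, t j = 1} =>
      ‖∑ j, (t.1 j : ℂ) * Complex.exp ((θs j : ℂ) * Complex.I)‖) := by
    refine ⟨0, ?_⟩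
    rintro x ⟨t, rfl⟩
    positivity
  exact (ciInf_le hbdd ⟨t₀, ht₀nn, ht₀sum⟩).trans_eq hval
end

section
/- For angles θ₁,...,θ_d all contained in an arc of width θ ≤ π, and for any convex weights t_j ≥ 0 with Σ t_j = 1, the quantity Σ_{j≠k} t_j t_k (1 − cos(θ_j − θ_k)) is maximized when the weights are supported on only two indices j₀, k₀ achieving the maximal angular separation |θ_{j₀} − θ_{k₀}| = θ. -/
open BigOperators Finset

lemma pairwise_cos_identity {d : ℕ} (θs : Fin d → ℝ) (t : Fin d → ℝ)
    (ht : ∑ j, t j = 1) :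
    (∑ j, ∑ k ∈ Finset.univ.filter (fun k => k ≠ j),
        t j * t k * (1 - Real.cos (θs j - θs k))) =
      1 - ((∑ j, t j * Real.cos (θs j))^2 + (∑ j, t j * Real.sin (θs j))^2) := by
  have hfull : ∀ j : Fin d,
      (∑ k ∈ Finset.univ.filter (fun k => k ≠ j),
        t j * t k * (1 - Real.cos (θs j - θs k))) =
      ∑ k, t j * t k * (1 - Real.cos (θs j - θs k)) := by
    intro j
    rw [Finset.filter_ne', Finset.sum_erase]
    simp
  simp_rw [hfull]
  have hterm : ∀ j k : Fin d, t j * t k * (1 - Real.cos (θs j - θs k)) =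
      t j * t k - (t j * Real.cos (θs j)) * (t k * Real.cos (θs k))
        - (t j * Real.sin (θs j)) * (t k * Real.sin (θs k)) := by
    intro j k; rw [Real.cos_sub]; ring
  simp_rw [hterm, Finset.sum_sub_distrib, ← Finset.mul_sum, ← Finset.sum_mul, ht]
  ring

/-- For angles in an arc of width `θarc ≤ π`, the quantity
`Σ_{j≠k} tⱼ t_k (1 − cos(θⱼ − θ_k))` over the probability simplex is maximized by weights
supported only on two indices `j₀, k₀` achieving the maximal separation `|θⱼ₀ − θ_k₀| = θarc`. -/
theorem max_pairwise_term_two_point_support {d : ℕ} (θs : Fin d → ℝ) (θarc a : ℝ)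
    (hθ : θarc ≤ Real.pi) (hθ0 : 0 ≤ θarc)
    (harc : ∀ j, θs j ∈ Set.Icc a (a + θarc))
    (j₀ k₀ : Fin d)
    (hsep : |θs j₀ - θs k₀| = θarc)
    (hmax : ∀ j k, |θs j - θs k| ≤ θarc) :
    ∃ s : Fin d → ℝ, (∀ j, 0 ≤ s j) ∧ (∑ j, s j = 1) ∧
      (∀ j, j ≠ j₀ → j ≠ k₀ → s j = 0) ∧
      ∀ t : Fin d → ℝ, (∀ j, 0 ≤ t j) → (∑ j, t j = 1) →
        (∑ j, ∑ k ∈ Finset.univ.filter (fun k => k ≠ j),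
            t j * t k * (1 - Real.cos (θs j - θs k))) ≤
          ∑ j, ∑ k ∈ Finset.univ.filter (fun k => k ≠ j),
            s j * s k * (1 - Real.cos (θs j - θs k)) := by
  have hpi := Real.pi_pos
  set s : Fin d → ℝ := fun j =>
    (if j = j₀ then (1:ℝ)/2 else 0) + (if j = k₀ then (1:ℝ)/2 else 0) with hs_def
  have hs_nonneg : ∀ j, 0 ≤ s j := by
    intro j; simp only [hs_def]; split_ifs <;> norm_num
  have hs_sum : ∑ j, s j = 1 := by
    simp [hs_def, Finset.sum_add_distrib]
    norm_num
  have hsC : ∑ j, s j * Real.cos (θs j)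
      = Real.cos (θs j₀) / 2 + Real.cos (θs k₀) / 2 := by
    simp [hs_def, add_mul, ite_mul, Finset.sum_add_distrib, div_eq_mul_inv, mul_comm]
  have hsS : ∑ j, s j * Real.sin (θs j)
      = Real.sin (θs j₀) / 2 + Real.sin (θs k₀) / 2 := by
    simp [hs_def, add_mul, ite_mul, Finset.sum_add_distrib, div_eq_mul_inv, mul_comm]
  have hcossep : Real.cos (θs j₀ - θs k₀) = Real.cos θarc := by
    rw [← Real.cos_abs, hsep]
  refine ⟨s, hs_nonneg, hs_sum, ?_, ?_⟩
  · intro j h1 h2; simp [hs_def, h1, h2]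
  · intro t ht0 ht1
    rw [pairwise_cos_identity θs t ht1, pairwise_cos_identity θs s hs_sum, hsC, hsS]
    set C := ∑ j, t j * Real.cos (θs j)
    set S := ∑ j, t j * Real.sin (θs j)
    set μ := a + θarc / 2 with hμ
    have hcosj : ∀ j, Real.cos (θarc / 2) ≤ Real.cos (θs j - μ) := by
      intro j
      obtain ⟨h1, h2⟩ := harc j
      have habs : |θs j - μ| ≤ θarc / 2 := by
        rw [abs_le]; constructor <;> [skip; skip] <;> simp only [hμ] <;> linarith
      calc Real.cos (θarc / 2) ≤ Real.cos |θs j - μ| :=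
            Real.cos_le_cos_of_nonneg_of_le_pi (abs_nonneg _) (by linarith) habs
        _ = Real.cos (θs j - μ) := Real.cos_abs _
    have hpos : 0 ≤ Real.cos (θarc / 2) :=
      Real.cos_nonneg_of_mem_Icc ⟨by linarith, by linarith⟩
    have hexp : ∑ j, t j * Real.cos (θs j - μ) = C * Real.cos μ + S * Real.sin μ := by
      have : ∀ j, t j * Real.cos (θs j - μ) =
          (t j * Real.cos (θs j)) * Real.cos μ + (t j * Real.sin (θs j)) * Real.sin μ := by
        intro j; rw [Real.cos_sub]; ring
      simp_rw [this, Finset.sum_add_distrib, ← Finset.sum_mul]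
      rfl
    have hsum : Real.cos (θarc / 2) ≤ C * Real.cos μ + S * Real.sin μ := by
      rw [← hexp]
      calc Real.cos (θarc / 2) = ∑ j, t j * Real.cos (θarc / 2) := by
            rw [← Finset.sum_mul, ht1, one_mul]
        _ ≤ ∑ j, t j * Real.cos (θs j - μ) :=
            Finset.sum_le_sum fun j _ => mul_le_mul_of_nonneg_left (hcosj j) (ht0 j)
    have hQ : Real.cos (θarc / 2) ^ 2 ≤ C ^ 2 + S ^ 2 := by
      nlinarith [Real.sin_sq_add_cos_sq μ, sq_nonneg (C * Real.sin μ - S * Real.cos μ),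
        mul_self_le_mul_self hpos hsum]
    have h2 : 2 * (θarc / 2) = θarc := by ring
    have hhalf : Real.cos (θarc / 2) ^ 2 = 1 / 2 + Real.cos θarc / 2 := by
      rw [Real.cos_sq, h2]
    nlinarith [Real.sin_sq_add_cos_sq (θs j₀), Real.sin_sq_add_cos_sq (θs k₀),
      Real.cos_sub (θs j₀) (θs k₀), hcossep]
end

section
/- Given two quantum states ρ₁ and ρ₂, each presented with probability 1/2, the optimal probability of correctly identifying which state was given, over all two-outcome POVM measurements, is P = 1/2 + (1/4)‖ρ₁ − ρ₂‖₁ (the Holevo–Helstrom bound). In particular the states are perfectly distinguishable iff ‖ρ₁ − ρ₂‖₁ = 2, and completely indistinguishable iff ρ₁ = ρ₂. -/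
open Matrix BigOperators
open scoped ComplexOrder

noncomputable def traceNorm {m : Type*} [Fintype m] [DecidableEq m] (A : Matrix m m ℂ) : ℝ :=
  (((Matrix.posSemidef_conjTranspose_mul_self A).1.eigenvectorUnitary *
      diagonal (fun i => ((Real.sqrt ((Matrix.posSemidef_conjTranspose_mul_self A).1.eigenvalues i) : ℝ) : ℂ)) *
      (star (Matrix.posSemidef_conjTranspose_mul_self A).1.eigenvectorUnitary : Matrix m m ℂ)).trace).re


lemma trace_mul_diagonal {d : ℕ} (A : Matrix (Fin d) (Fin d) ℂ) (v : Fin d → ℂ) :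
    (A * diagonal v).trace = ∑ i, A i i * v i := by
  simp [Matrix.trace, Matrix.diag, Matrix.mul_diagonal]

lemma diag_re_nonneg {d : ℕ} {F : Matrix (Fin d) (Fin d) ℂ} (hF : F.PosSemidef) (i : Fin d) :
    0 ≤ (F i i).re := by
  have := hF.re_dotProduct_nonneg (Pi.single i 1)
  simpa [dotProduct, Matrix.mulVec, Pi.single_apply, Finset.sum_ite_eq] using this

lemma sandwich_mul {d : ℕ} (U A B : Matrix (Fin d) (Fin d) ℂ) (h : star U * U = 1) :
    (U * A * star U) * (U * B * star U) = U * (A * B) * star U := by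
  have h2 : ∀ C : Matrix (Fin d) (Fin d) ℂ, star U * (U * C) = C := by
    intro C; rw [← Matrix.mul_assoc, h, Matrix.one_mul]
  simp only [Matrix.mul_assoc, h2]

lemma trace_sandwich {d : ℕ} (U A : Matrix (Fin d) (Fin d) ℂ) (h : star U * U = 1) :
    (U * A * star U).trace = A.trace := by
  rw [Matrix.trace_mul_cycle, h, Matrix.one_mul]

lemma traceNorm_eq_sum_abs {d : ℕ} {Δ : Matrix (Fin d) (Fin d) ℂ} (hΔ : Δ.IsHermitian) :
    traceNorm Δ = ∑ i, |hΔ.eigenvalues i| := by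
  have hH := (Matrix.posSemidef_conjTranspose_mul_self Δ).1
  have e1 : traceNorm Δ = (hH.cfc Real.sqrt).trace.re := by
    simp only [traceNorm, IsHermitian.cfc, Unitary.conjStarAlgAut_apply]; rfl
  have hsa : IsSelfAdjoint Δ := hΔ
  have hsq : Δ * Δ = cfc (fun x : ℝ => x * x) Δ := by
    rw [cfc_mul (fun x : ℝ => x) (fun x => x) Δ, cfc_id' ℝ Δ]
  have e2 : cfc Real.sqrt (Δᴴ * Δ) = cfc (fun x : ℝ => |x|) Δ := by
    rw [hΔ.eq, hsq, ← cfc_comp Real.sqrt (fun x : ℝ => x * x) Δ]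
    exact cfc_congr fun x _ => Real.sqrt_mul_self_eq_abs x
  have hU1 : star (hΔ.eigenvectorUnitary : Matrix (Fin d) (Fin d) ℂ) * hΔ.eigenvectorUnitary = 1 :=
    Matrix.mem_unitaryGroup_iff'.mp hΔ.eigenvectorUnitary.2
  rw [e1, ← IsHermitian.cfc_eq hH, e2, IsHermitian.cfc_eq hΔ, IsHermitian.cfc,
    Unitary.conjStarAlgAut_apply, trace_sandwich _ _ hU1, Matrix.trace_diagonal]
  simp

/-- Holevo–Helstrom: Given states `ρ₁, ρ₂` each with prior `1/2`, the optimal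
success probability over two-outcome POVMs `(E, 1 − E)` is `1/2 + (1/4)‖ρ₁ − ρ₂‖₁`, and the
states are completely indistinguishable (optimal value `1/2`, i.e. `‖ρ₁ − ρ₂‖₁ = 0`) iff
`ρ₁ = ρ₂`. -/
theorem holevo_helstrom {d : ℕ} (ρ₁ ρ₂ : Matrix (Fin d) (Fin d) ℂ)
    (hρ₁ : ρ₁.PosSemidef) (hρ₂ : ρ₂.PosSemidef)
    (hρ₁tr : ρ₁.trace = 1) (hρ₂tr : ρ₂.trace = 1) :
    IsGreatest
      {P : ℝ | ∃ E : Matrix (Fin d) (Fin d) ℂ, E.PosSemidef ∧ (1 - E).PosSemidef ∧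
        P = (1/2) * ((E * ρ₁).trace.re) + (1/2) * (((1 - E) * ρ₂).trace.re)}
      (1/2 + (1/4) * traceNorm (ρ₁ - ρ₂)) ∧
      ((1/2 + (1/4) * traceNorm (ρ₁ - ρ₂) = 1) ↔ traceNorm (ρ₁ - ρ₂) = 2) ∧
      (traceNorm (ρ₁ - ρ₂) = 0 ↔ ρ₁ = ρ₂) := by
  set Δ : Matrix (Fin d) (Fin d) ℂ := ρ₁ - ρ₂ with hΔdef
  have hΔ : Δ.IsHermitian := hρ₁.1.sub hρ₂.1
  set U : Matrix (Fin d) (Fin d) ℂ := (hΔ.eigenvectorUnitary : Matrix (Fin d) (Fin d) ℂ) with hU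
  have hU1 : star U * U = 1 := Matrix.mem_unitaryGroup_iff'.mp hΔ.eigenvectorUnitary.2
  have hU2 : U * star U = 1 := Matrix.mem_unitaryGroup_iff.mp hΔ.eigenvectorUnitary.2
  set lam : Fin d → ℝ := hΔ.eigenvalues with hlam
  set D : Matrix (Fin d) (Fin d) ℂ := diagonal (RCLike.ofReal ∘ lam) with hD
  have hspec : Δ = U * D * star U := hΔ.spectral_theorem
  have htn : traceNorm Δ = ∑ i, |lam i| := traceNorm_eq_sum_abs hΔ
  -- sum of eigenvalues is zero
  have htr0 : Δ.trace = 0 := by rw [hΔdef, Matrix.trace_sub, hρ₁tr, hρ₂tr, sub_self]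
  have hsum0 : ∑ i, lam i = 0 := by
    have h1 : Δ.trace = ∑ i, (lam i : ℂ) := by
      rw [hspec, trace_sandwich U D hU1, hD, Matrix.trace_diagonal]
      simp
    rw [htr0] at h1
    exact_mod_cast congrArg Complex.re h1.symm
  have hmax : ∑ i, max (lam i) 0 = traceNorm Δ / 2 := by
    have : ∀ i : Fin d, max (lam i) 0 = (|lam i| + lam i) / 2 := by
      intro i
      rcases le_total 0 (lam i) with h | h
      · rw [max_eq_left h, abs_of_nonneg h]; ring
      · rw [max_eq_right h, abs_of_nonpos h]; ring
    calc ∑ i, max (lam i) 0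
        = ∑ i, (|lam i|/2 + lam i/2) := Finset.sum_congr rfl fun i _ => by rw [this i]; ring
      _ = (∑ i, |lam i|)/2 + (∑ i, lam i)/2 := by
            rw [Finset.sum_add_distrib, Finset.sum_div, Finset.sum_div]
      _ = traceNorm Δ / 2 := by rw [hsum0, htn]; ring
  -- success probability rewriting
  have hP : ∀ E : Matrix (Fin d) (Fin d) ℂ,
      (1/2 : ℝ) * ((E * ρ₁).trace.re) + (1/2) * (((1 - E) * ρ₂).trace.re)
        = 1/2 + 1/2 * ((E * Δ).trace.re) := by
    intro E
    have h1 : (1 - E) * ρ₂ = ρ₂ - E * ρ₂ := by rw [sub_mul, one_mul]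
    have h2 : E * Δ = E * ρ₁ - E * ρ₂ := by rw [hΔdef, mul_sub]
    rw [h1, h2, Matrix.trace_sub, Matrix.trace_sub, hρ₂tr]
    simp [Complex.sub_re]
    ring
  constructor
  · constructor
    · -- membership: optimal measurement
      set c : Fin d → ℂ := fun i => if 0 < lam i then 1 else 0 with hc
      refine ⟨U * diagonal c * star U, ?_, ?_, ?_⟩
      · rw [Matrix.star_eq_conjTranspose]
        refine Matrix.PosSemidef.mul_mul_conjTranspose_same ?_ U
        refine Matrix.posSemidef_diagonal_iff.mpr fun i => ?_
        rw [hc]; dsimp only; split <;> simp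
      · have he : (1 : Matrix (Fin d) (Fin d) ℂ) - U * diagonal c * star U
            = U * diagonal (fun i => 1 - c i) * star U := by
          have : diagonal (fun i => 1 - c i) = 1 - diagonal c := by
            rw [← Matrix.diagonal_one, Matrix.diagonal_sub]
          rw [this, Matrix.mul_sub, Matrix.sub_mul, Matrix.mul_one, hU2]
        rw [he, Matrix.star_eq_conjTranspose]
        refine Matrix.PosSemidef.mul_mul_conjTranspose_same ?_ U
        refine Matrix.posSemidef_diagonal_iff.mpr fun i => ?_
        rw [hc]; dsimp only; split <;> simp
      · rw [hP]
        have hE : U * diagonal c * star U * Δ = U * (diagonal c * D) * star U := by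
          conv_lhs => rw [hspec]
          exact sandwich_mul U (diagonal c) D hU1
        rw [hE, trace_sandwich _ _ hU1, hD, Matrix.diagonal_mul_diagonal, Matrix.trace_diagonal]
        have : ∀ i : Fin d, (c i * (RCLike.ofReal ∘ lam) i).re = max (lam i) 0 := by
          intro i
          rw [hc]
          dsimp only [Function.comp]
          split
          · next h => simp [max_eq_left (le_of_lt h)]
          · next h => simp [max_eq_right (le_of_not_gt h)]
        rw [Complex.re_sum, Finset.sum_congr rfl fun i _ => this i, hmax]
        ring
    · -- upper bound
      rintro P ⟨E, hE, h1E, rfl⟩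
      rw [hP]
      have hub : (E * Δ).trace.re ≤ traceNorm Δ / 2 := by
        set F : Matrix (Fin d) (Fin d) ℂ := star U * E * U with hF
        have hFpsd : F.PosSemidef := by
          rw [hF, Matrix.star_eq_conjTranspose]
          exact hE.conjTranspose_mul_mul_same U
        have h1Fpsd : ((1 : Matrix (Fin d) (Fin d) ℂ) - F).PosSemidef := by
          have : (1 : Matrix (Fin d) (Fin d) ℂ) - F = star U * (1 - E) * U := by
            rw [Matrix.mul_sub, Matrix.sub_mul, Matrix.mul_one, hU1, hF]
          rw [this, Matrix.star_eq_conjTranspose]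
          exact h1E.conjTranspose_mul_mul_same U
        have hc0 : ∀ i, 0 ≤ (F i i).re := diag_re_nonneg hFpsd
        have hc1 : ∀ i, (F i i).re ≤ 1 := by
          intro i
          have := diag_re_nonneg h1Fpsd i
          have h1 : ((1 : Matrix (Fin d) (Fin d) ℂ) - F) i i = 1 - F i i := by
            simp [Matrix.sub_apply, Matrix.one_apply_eq]
          rw [h1] at this
          simp only [Complex.sub_re, Complex.one_re] at this
          linarith
        have htrF : (E * Δ).trace = (F * D).trace := by
          conv_lhs => rw [hspec]
          rw [← Matrix.mul_assoc, ← Matrix.mul_assoc, Matrix.trace_mul_cycle, hF]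
          simp only [Matrix.mul_assoc]
        rw [htrF, hD, trace_mul_diagonal, Complex.re_sum, ← hmax]
        refine Finset.sum_le_sum fun i _ => ?_
        have : (F i i * (RCLike.ofReal ∘ lam) i).re = (F i i).re * lam i := by
          simp [Function.comp, Complex.mul_re]
        rw [this]
        rcases le_or_gt 0 (lam i) with h | h
        · rw [max_eq_left h]
          nlinarith [hc0 i, hc1 i]
        · rw [max_eq_right (le_of_lt h)]
          nlinarith [hc0 i, hc1 i]
      linarith
  constructor
  · constructor <;> intro h <;> linarith
  · constructor
    · intro h
      rw [htn] at h
      have hall : ∀ i ∈ Finset.univ, |lam i| = 0 :=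
        (Finset.sum_eq_zero_iff_of_nonneg fun i _ => abs_nonneg _).mp h
      have hD0 : D = 0 := by
        rw [hD]
        ext i j
        by_cases hij : i = j
        · subst hij
          rw [Matrix.diagonal_apply_eq]
          simp [abs_eq_zero.mp (hall i (Finset.mem_univ i))]
        · simp [Matrix.diagonal_apply_ne _ hij]
      have : Δ = 0 := by rw [hspec, hD0, Matrix.mul_zero, Matrix.zero_mul]
      exact sub_eq_zero.mp (by rw [← hΔdef]; exact this)
    · intro h
      have hΔ0 : Δ = 0 := by rw [hΔdef, h, sub_self]
      have hD0 : D = 0 := by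
        have : star U * Δ * U = D := by
          rw [hspec, Matrix.mul_assoc, Matrix.mul_assoc, hU1, Matrix.mul_one, ← Matrix.mul_assoc,
            hU1, Matrix.one_mul]
        rw [← this, hΔ0, Matrix.mul_zero, Matrix.zero_mul]
      rw [htn]
      refine Finset.sum_eq_zero fun i _ => ?_
      have h0 : D i i = 0 := by rw [hD0]; rfl
      rw [hD, Matrix.diagonal_apply_eq] at h0
      simp only [Function.comp_apply, RCLike.ofReal_eq_zero] at h0
      rw [h0, abs_zero]
end
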